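/- Let $s\in(1/2,1)$ and let $b:(0,\infty)\to(1/2,1)$ be a continuous function with $\lim_{t\to\infty} b(t) = s$. Then for every real $x$ with $x < \frac{1}{2-2s} - 1$ one has $\lim_{\alpha\to\infty} \alpha^{x}\int_{\alpha}^{\infty} t^{1/(2b(t)-2)}\,dt = 0$ (in particular the integral $\int_{\alpha}^{\infty} t^{1/(2b(t)-2)}\,dt$ is finite for all sufficiently large $\alpha$). -/

import Mathlib

open Filter MeasureTheory Set Real

theorem tail_integral_decay_below_critical_exponent (s : ℝ) (hs : s ∈ Ioo (1/2 : ℝ) 1)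
    (b : ℝ → ℝ)
    (hb : ∀ t : ℝ, 0 < t → b t ∈ Ioo (1/2 : ℝ) 1)
    (hbc : ContinuousOn b (Ioi 0))
    (hbs : Tendsto b atTop (nhds s))
    (x : ℝ) (hx : x < 1 / (2 - 2 * s) - 1) :
    Tendsto (fun α : ℝ =>
        ENNReal.ofReal (α ^ x) * ∫⁻ t in Ioi α, ENNReal.ofReal (t ^ (1 / (2 * b t - 2))))
      atTop (nhds 0) := by
  obtain ⟨hs1, hs2⟩ := hs
  set c : ℝ := 1 / (2 - 2 * s) with hc
  have h2s : 0 < 2 - 2 * s := by linarith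
  have hc1 : 1 < c := by
    rw [hc, lt_div_iff₀ h2s]; linarith
  have hxc : x < c - 1 := hx
  set δ : ℝ := min (c - 1) (c - 1 - x) / 2 with hδ
  have hδpos : 0 < δ := by
    apply div_pos _ two_pos
    apply lt_min <;> linarith
  obtain ⟨p, hp⟩ : ∃ p : ℝ, p = -c + δ := ⟨_, rfl⟩
  have hm1 := min_le_left (c - 1) (c - 1 - x)
  have hm2 := min_le_right (c - 1) (c - 1 - x)
  have hp1 : p < -1 := by
    have : δ < c - 1 := by rw [hδ]; linarith
    rw [hp]; linarith
  have hxp : x + p + 1 < 0 := by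
    have : δ < c - 1 - x := by rw [hδ]; linarith
    rw [hp]; linarith
  -- the exponent tends to -c
  have hne : 2 * s - 2 ≠ 0 := by intro h; linarith
  have hden : Tendsto (fun t => 2 * b t - 2) atTop (nhds (2 * s - 2)) :=
    (hbs.const_mul 2).sub_const 2
  have he : Tendsto (fun t => 1 / (2 * b t - 2)) atTop (nhds (1 / (2 * s - 2))) :=
    tendsto_const_nhds.div hden hne
  have hcs : 1 / (2 * s - 2) = -c := by
    rw [hc]; field_simp
    rw [div_eq_iff (sub_ne_zero.mpr (ne_of_lt hs2))]; ring
  rw [hcs] at he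
  have hev : ∀ᶠ t in atTop, 1 / (2 * b t - 2) < p :=
    he.eventually_lt_const (by rw [hp]; linarith)
  obtain ⟨T, hT⟩ := eventually_atTop.mp hev
  -- squeeze
  have hC : 0 < -1 / (p + 1) := by
    apply div_pos_of_neg_of_neg <;> linarith
  refine tendsto_of_tendsto_of_tendsto_of_le_of_le'
    (g := fun _ => (0 : ENNReal))
    (h := fun α : ℝ => ENNReal.ofReal (α ^ (x + p + 1) * (-1 / (p + 1))))
    tendsto_const_nhds ?_ (Eventually.of_forall fun _ => zero_le) ?_
  · have h1 : Tendsto (fun α : ℝ => α ^ (x + p + 1)) atTop (nhds 0) := by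
      have := tendsto_rpow_neg_atTop (y := -(x + p + 1)) (by linarith)
      simpa using this
    have h2 : Tendsto (fun α : ℝ => α ^ (x + p + 1) * (-1 / (p + 1))) atTop (nhds 0) := by
      simpa using h1.mul_const (-1 / (p + 1))
    have := (ENNReal.continuous_ofReal.tendsto 0).comp h2
    rw [ENNReal.ofReal_zero] at this; exact this
  · filter_upwards [eventually_ge_atTop (max T 1)] with α hα
    have hα1 : (1 : ℝ) ≤ α := le_trans (le_max_right T 1) hα
    have hαT : T ≤ α := le_trans (le_max_left T 1) hα
    have hα0 : 0 < α := lt_of_lt_of_le one_pos hα1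
    have hmono : (∫⁻ t in Ioi α, ENNReal.ofReal (t ^ (1 / (2 * b t - 2)))) ≤
        ∫⁻ t in Ioi α, ENNReal.ofReal (t ^ p) := by
      apply lintegral_mono_ae
      refine (ae_restrict_iff' measurableSet_Ioi).mpr (Eventually.of_forall fun t ht => ?_)
      apply ENNReal.ofReal_le_ofReal
      apply Real.rpow_le_rpow_of_exponent_le (le_trans hα1 (le_of_lt ht))
      exact le_of_lt (hT t (le_trans hαT (le_of_lt ht)))
    have hint : (∫⁻ t in Ioi α, ENNReal.ofReal (t ^ p)) =
        ENNReal.ofReal (-α ^ (p + 1) / (p + 1)) := by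
      rw [← integral_Ioi_rpow_of_lt hp1 hα0]
      rw [← ofReal_integral_eq_lintegral_ofReal]
      · exact integrableOn_Ioi_rpow_of_lt hp1 hα0
      · refine (ae_restrict_iff' measurableSet_Ioi).mpr (Eventually.of_forall fun t ht => ?_)
        exact Real.rpow_nonneg (le_of_lt (lt_trans hα0 ht)) p
    calc ENNReal.ofReal (α ^ x) * ∫⁻ t in Ioi α, ENNReal.ofReal (t ^ (1 / (2 * b t - 2)))
        ≤ ENNReal.ofReal (α ^ x) * ENNReal.ofReal (-α ^ (p + 1) / (p + 1)) := by
          rw [← hint]; exact mul_le_mul_right hmono _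
      _ = ENNReal.ofReal (α ^ (x + p + 1) * (-1 / (p + 1))) := by
          rw [← ENNReal.ofReal_mul (Real.rpow_nonneg hα0.le x)]
          congr 1
          have hA : α ^ x * (-α ^ (p + 1) / (p + 1)) = α ^ x * α ^ (p + 1) * (-1 / (p + 1)) := by
            generalize α ^ (p + 1) = A
            generalize α ^ x = B
            ring
          rw [hA, ← Real.rpow_add hα0, show x + (p + 1) = x + p + 1 by ring]
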